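/- arXiv:0907.3199 — 6 statements merged into one kernel-verified Lean document; each statement's English description precedes it below -/
import Mathlib

section
/- Let S be a finite set of cardinality n and let k' ≤ k ≤ n. There exists a surjective map ξ from the k-subsets of S to the k'-subsets of S with ξ(A) ⊆ A for all A, and such that every k'-subset has exactly λ preimages, if and only if C(n,k) = λ·C(n,k'). -/
open Finset

lemma count_supersets {α : Type*} [DecidableEq α] (S B : Finset α) (k : ℕ) (hB : B ⊆ S) (hBk : B.card ≤ k) :
    ((S.powersetCard k).filter (fun A => B ⊆ A)).card
      = (S.card - B.card).choose (k - B.card) := by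
  rw [← Finset.card_sdiff_of_subset hB, ← Finset.card_powersetCard (k - B.card) (S \ B)]
  apply Finset.card_bij (fun A _ => A \ B)
  · intro A hA
    simp only [mem_filter, mem_powersetCard] at hA
    obtain ⟨⟨hAS, hAk⟩, hBA⟩ := hA
    rw [mem_powersetCard]
    exact ⟨sdiff_subset_sdiff hAS le_rfl, by rw [card_sdiff_of_subset hBA, hAk]⟩
  · intro A₁ h₁ A₂ h₂ h
    simp only [mem_filter, mem_powersetCard] at h₁ h₂
    have e1 : A₁ = A₁ \ B ∪ B := by rw [sdiff_union_of_subset h₁.2]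
    have e2 : A₂ = A₂ \ B ∪ B := by rw [sdiff_union_of_subset h₂.2]
    rw [e1, e2, h]
  · intro C hC
    rw [mem_powersetCard] at hC
    refine ⟨C ∪ B, ?_, ?_⟩
    · have hCB : Disjoint C B := (sdiff_disjoint.mono_left hC.1)
      simp only [mem_filter, mem_powersetCard]
      refine ⟨⟨union_subset (hC.1.trans sdiff_subset) hB, ?_⟩, subset_union_right⟩
      rw [card_union_of_disjoint hCB, hC.2]
      omega
    · have hCB : Disjoint C B := (sdiff_disjoint.mono_left hC.1)
      rw [union_sdiff_right, sdiff_eq_self_of_disjoint hCB]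

/-- For a finite set `S` of cardinality `n` and `k' ≤ k ≤ n`, there exists a
regular `k'`-sampling of the `k`-subsets of `S` with redundancy `l` (a map
`ξ` sending each `k`-subset to one of its `k'`-subsets such that every
`k'`-subset of `S` has exactly `l` preimages) if, and only if,
`C(n,k) = l * C(n,k')`. -/
theorem regular_sampling_iff {α : Type*} [DecidableEq α] (S : Finset α)
    (n k k' l : ℕ) (hS : S.card = n) (hk' : k' ≤ k) (hk : k ≤ n) :
    (∃ ξ : Finset α → Finset α,
        (∀ A ∈ S.powersetCard k, ξ A ⊆ A ∧ (ξ A).card = k') ∧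
        (∀ B ∈ S.powersetCard k',
          ((S.powersetCard k).filter (fun A => ξ A = B)).card = l)) ↔
      n.choose k = l * n.choose k' := by
  constructor
  · rintro ⟨ξ, h1, h2⟩
    have := Finset.card_eq_sum_card_fiberwise (f := ξ) (s := S.powersetCard k)
      (t := S.powersetCard k') ?_
    · rw [Finset.card_powersetCard, hS] at this
      rw [this, Finset.sum_congr rfl h2, Finset.sum_const, Finset.card_powersetCard, hS,
        smul_eq_mul, mul_comm]
    · intro A hA
      rw [Finset.mem_coe, mem_powersetCard] at hA ⊢
      exact ⟨(h1 A (by rw [mem_powersetCard]; exact hA)).1.trans hA.1,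
        (h1 A (by rw [mem_powersetCard]; exact hA)).2⟩
  · intro h
    -- key numerics
    have hck : 0 < n.choose k := Nat.choose_pos hk
    have hck' : 0 < n.choose k' := Nat.choose_pos (hk'.trans hk)
    have hl : 0 < l := by
      rcases Nat.eq_zero_or_pos l with h0 | h0
      · rw [h0, zero_mul] at h; omega
      · exact h0
    have key : (n - k').choose (k - k') = l * k.choose k' := by
      have := Nat.choose_mul (n := n) (k := k) (s := k') hk'
      rw [h] at this
      -- l * C(n,k') * C(k,k') = C(n,k') * C(n-k',k-k')
      have h2 : n.choose k' * (l * k.choose k') = n.choose k' * ((n - k').choose (k - k')) := by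
        rw [← this]; ring
      exact (Nat.eq_of_mul_eq_mul_left hck' h2).symm
    -- Hall setup
    set ι := {A : Finset α // A ∈ S.powersetCard k} with hι
    let t : ι → Finset (Finset α × Fin l) :=
      fun A => (A.1.powersetCard k') ×ˢ (Finset.univ : Finset (Fin l))
    have hall : ∀ s : Finset ι, s.card ≤ (s.biUnion t).card := by
      intro s
      have hdeg : ∀ A : ι, (t A).card = k.choose k' * l := by
        intro A
        have hAk : A.1.card = k := (mem_powersetCard.mp A.2).2
        simp [t, Finset.card_powersetCard, hAk]
      -- double counting
      have hsum : s.card * (k.choose k' * l) = ∑ A ∈ s, (t A).card := by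
        rw [Finset.sum_congr rfl fun A _ => hdeg A, Finset.sum_const, smul_eq_mul]
      have hsub : ∀ A ∈ s, t A ⊆ s.biUnion t := fun A hA => Finset.subset_biUnion_of_mem t hA
      have hsum2 : ∑ A ∈ s, (t A).card
          = ∑ y ∈ s.biUnion t, (s.filter (fun A => y ∈ t A)).card := by
        calc ∑ A ∈ s, (t A).card
            = ∑ A ∈ s, ∑ y ∈ s.biUnion t, (if y ∈ t A then 1 else 0) := by
              refine Finset.sum_congr rfl fun A hA => ?_
              rw [← Finset.card_filter, Finset.filter_mem_eq_inter,
                Finset.inter_eq_right.mpr (hsub A hA)]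
          _ = ∑ y ∈ s.biUnion t, ∑ A ∈ s, (if y ∈ t A then 1 else 0) := Finset.sum_comm
          _ = _ := by
              refine Finset.sum_congr rfl fun y _ => ?_
              rw [← Finset.card_filter]
      have hbound : ∀ y ∈ s.biUnion t, (s.filter (fun A => y ∈ t A)).card ≤ k.choose k' * l := by
        rintro ⟨B, i⟩ hy
        rw [Finset.mem_biUnion] at hy
        obtain ⟨A₀, hA₀s, hA₀⟩ := hy
        simp only [t, Finset.mem_product, mem_powersetCard] at hA₀
        have hBS : B ⊆ S := hA₀.1.1.trans (mem_powersetCard.mp A₀.2).1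
        have hBk' : B.card = k' := hA₀.1.2
        have hinj : (s.filter (fun A => (B, i) ∈ t A)).card
            ≤ ((S.powersetCard k).filter (fun A => B ⊆ A)).card := by
          apply Finset.card_le_card_of_injOn (fun A => A.1)
          · intro A hA
            simp only [Finset.mem_coe, Finset.mem_filter, t, Finset.mem_product, mem_powersetCard] at hA ⊢
            exact ⟨mem_powersetCard.mp A.2, hA.2.1.1⟩
          · intro A₁ _ A₂ _ hAe
            exact Subtype.ext hAe
        calc (s.filter (fun A => (B, i) ∈ t A)).card
            ≤ ((S.powersetCard k).filter (fun A => B ⊆ A)).card := hinj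
          _ = (S.card - B.card).choose (k - B.card) :=
              count_supersets S B k hBS (hBk' ▸ hk')
          _ = k.choose k' * l := by rw [hS, hBk', key, mul_comm]
      have : s.card * (k.choose k' * l) ≤ (s.biUnion t).card * (k.choose k' * l) := by
        rw [hsum, hsum2]
        calc ∑ y ∈ s.biUnion t, (s.filter (fun A => y ∈ t A)).card
            ≤ ∑ _y ∈ s.biUnion t, k.choose k' * l := Finset.sum_le_sum hbound
          _ = _ := by rw [Finset.sum_const, smul_eq_mul]
      have hpos : 0 < k.choose k' * l := Nat.mul_pos (Nat.choose_pos hk') hl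
      exact Nat.le_of_mul_le_mul_right this hpos
    obtain ⟨f, hfinj, hft⟩ := (Finset.all_card_le_biUnion_card_iff_exists_injective t).mp hall
    -- image of f is all of (S.powersetCard k') ×ˢ univ
    have himg : (Finset.univ : Finset ι).image f
        = (S.powersetCard k') ×ˢ (Finset.univ : Finset (Fin l)) := by
      apply Finset.eq_of_subset_of_card_le
      · intro y hy
        rw [Finset.mem_image] at hy
        obtain ⟨A, _, rfl⟩ := hy
        have := hft A
        simp only [t, Finset.mem_product, mem_powersetCard] at this ⊢
        exact ⟨⟨this.1.1.trans (mem_powersetCard.mp A.2).1, this.1.2⟩, this.2⟩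
      · rw [Finset.card_product, Finset.card_powersetCard, Finset.card_univ, Fintype.card_fin,
          Finset.card_image_of_injective _ hfinj, Finset.card_univ, Fintype.card_coe,
          Finset.card_powersetCard, hS, h, mul_comm]
    classical
    refine ⟨fun A => if hA : A ∈ S.powersetCard k then (f ⟨A, hA⟩).1 else ∅, ?_, ?_⟩
    · intro A hA
      have := hft ⟨A, hA⟩
      simp only [t, Finset.mem_product, mem_powersetCard] at this
      simp only [dif_pos hA]
      exact ⟨this.1.1, this.1.2⟩
    · intro B hB
      -- bijection with Fin l via second coordinate
      have hbij : ((S.powersetCard k).filter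
            (fun A => (if hA : A ∈ S.powersetCard k then (f ⟨A, hA⟩).1 else ∅) = B)).card
          = (Finset.univ : Finset (Fin l)).card := by
        apply Finset.card_bij
          (fun A hA => (f ⟨A, (Finset.mem_filter.mp hA).1⟩).2)
        · intros; exact Finset.mem_univ _
        · intro A₁ hA₁ A₂ hA₂ he
          rw [Finset.mem_filter] at hA₁ hA₂
          have e₁ : (f ⟨A₁, hA₁.1⟩).1 = B := by simpa only [dif_pos hA₁.1] using hA₁.2
          have e₂ : (f ⟨A₂, hA₂.1⟩).1 = B := by simpa only [dif_pos hA₂.1] using hA₂.2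
          have : f ⟨A₁, hA₁.1⟩ = f ⟨A₂, hA₂.1⟩ := by
            apply Prod.ext <;> simp [e₁, e₂, he]
          exact congrArg Subtype.val (hfinj this)
        · intro i _
          have : (B, i) ∈ (Finset.univ : Finset ι).image f := by
            rw [himg, Finset.mem_product]; exact ⟨hB, Finset.mem_univ i⟩
          rw [Finset.mem_image] at this
          obtain ⟨A, _, hfA⟩ := this
          refine ⟨A.1, ?_, ?_⟩
          · rw [Finset.mem_filter]
            refine ⟨A.2, ?_⟩
            simp only [dif_pos A.2]
            rw [show (⟨A.1, A.2⟩ : ι) = A from rfl, hfA]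
          · rw [show (⟨A.1, _⟩ : ι) = A from rfl, hfA]
      simpa using hbij
end

section
/- Let S be a finite set of cardinality n with n ≡ 2 (mod 3) and n ≥ 3. Then there exists a map ξ from the 3-subsets of S to the 2-subsets of S with ξ(A) ⊆ A for every 3-subset A, such that every 2-subset of S has exactly (n−2)/3 preimages. -/
open Finset

lemma cnt_range' (r : ℕ) (hr : r < 3) : ∀ m, ((Finset.range m).filter (fun z => z % 3 = r)).card
    = (m + 2 - r) / 3 := by
  intro m
  induction m with
  | zero => simp; omega
  | succ m ih =>
    rw [Finset.range_add_one, Finset.filter_insert]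
    by_cases h : m % 3 = r
    · rw [if_pos h, Finset.card_insert_of_notMem (by simp), ih]; omega
    · rw [if_neg h, ih]; omega

lemma cnt_Ico (r a b : ℕ) (hr : r < 3) (hab : a ≤ b) :
    ((Finset.Ico a b).filter (fun z => z % 3 = r)).card = (b + 2 - r) / 3 - (a + 2 - r) / 3 := by
  have h1 : Finset.range b = Finset.range a ∪ Finset.Ico a b := by
    ext z; simp [Finset.mem_Ico]; omega
  have h2 : Disjoint (Finset.range a) (Finset.Ico a b) := by
    simp [Finset.disjoint_left, Finset.mem_Ico, Finset.mem_range]; omega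
  have := cnt_range' r hr b
  rw [h1, Finset.filter_union, Finset.card_union_of_disjoint (Finset.disjoint_filter_filter h2),
    cnt_range' r hr a] at this
  omega

lemma cnt_Ico_shift (c t a b : ℕ) (ht : t < 3) (hab : a ≤ b) :
    ((Finset.Ico a b).filter (fun z => (c + z) % 3 = t)).card
      = (b + 2 - (t + 3 - c % 3) % 3) / 3 - (a + 2 - (t + 3 - c % 3) % 3) / 3 := by
  have : ((Finset.Ico a b).filter (fun z => (c + z) % 3 = t))
      = ((Finset.Ico a b).filter (fun z => z % 3 = (t + 3 - c % 3) % 3)) := by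
    apply Finset.filter_congr; intro z _; constructor <;> intro h <;> omega
  rw [this, cnt_Ico _ _ _ (by omega) hab]

lemma key_count (n i j : ℕ) (hij : i < j) (hjn : j < n) (hn : n % 3 = 2) :
    ((Finset.range n).filter (fun k => k ≠ i ∧ k ≠ j ∧
      (i + j + k) % 3 = (if k < i then 0 else if k < j then 1 else 2))).card = (n - 2) / 3 := by
  have hsplit : ((Finset.range n).filter (fun k => k ≠ i ∧ k ≠ j ∧
      (i + j + k) % 3 = (if k < i then 0 else if k < j then 1 else 2)))
      = ((Finset.Ico 0 i).filter (fun k => (i + j + k) % 3 = 0))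
        ∪ ((Finset.Ico (i+1) j).filter (fun k => (i + j + k) % 3 = 1))
        ∪ ((Finset.Ico (j+1) n).filter (fun k => (i + j + k) % 3 = 2)) := by
    ext k
    simp only [Finset.mem_filter, Finset.mem_range, Finset.mem_union, Finset.mem_Ico]
    split_ifs with h1 h2 <;> omega
  rw [hsplit]
  rw [Finset.card_union_of_disjoint (by simp [Finset.disjoint_left, Finset.mem_Ico]; omega),
    Finset.card_union_of_disjoint (by simp [Finset.disjoint_left, Finset.mem_Ico]; omega)]
  rw [cnt_Ico_shift (i+j) 0 0 i (by omega) (by omega),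
    cnt_Ico_shift (i+j) 1 (i+1) j (by omega) (by omega),
    cnt_Ico_shift (i+j) 2 (j+1) n (by omega) (by omega)]
  omega
open Finset

lemma xi_triple {α : Type*} [DecidableEq α] (f : α → ℕ) (x y z : α)
    (h1 : f x < f y) (h2 : f y < f z) :
    ({x, y, z} : Finset α).filter
        (fun a => (({x, y, z} : Finset α).filter (fun b => f b < f a)).card
          ≠ (({x, y, z} : Finset α).sum f) % 3)
      = if (f x + f y + f z) % 3 = 0 then ({y, z} : Finset α)
        else if (f x + f y + f z) % 3 = 1 then {x, z} else {x, y} := by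
  have hxy : x ≠ y := fun h => by subst h; omega
  have hxz : x ≠ z := fun h => by subst h; omega
  have hyz : y ≠ z := fun h => by subst h; omega
  have hsum : ({x, y, z} : Finset α).sum f = f x + f y + f z := by
    rw [Finset.sum_insert (by simp [hxy, hxz]), Finset.sum_insert (by simp [hyz]),
      Finset.sum_singleton, add_assoc]
  have hrx : (({x, y, z} : Finset α).filter (fun b => f b < f x)).card = 0 := by
    rw [Finset.card_eq_zero, Finset.filter_eq_empty_iff]
    rintro a ha
    simp only [Finset.mem_insert, Finset.mem_singleton] at ha
    rcases ha with rfl | rfl | rfl <;> omega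
  have hry : (({x, y, z} : Finset α).filter (fun b => f b < f y)).card = 1 := by
    have : ({x, y, z} : Finset α).filter (fun b => f b < f y) = {x} := by
      ext a
      simp only [Finset.mem_filter, Finset.mem_insert, Finset.mem_singleton]
      constructor
      · rintro ⟨rfl | rfl | rfl, h⟩ <;> first | rfl | omega
      · rintro rfl; exact ⟨Or.inl rfl, h1⟩
    rw [this, Finset.card_singleton]
  have hrz : (({x, y, z} : Finset α).filter (fun b => f b < f z)).card = 2 := by
    have : ({x, y, z} : Finset α).filter (fun b => f b < f z) = {x, y} := by
      ext a
      simp only [Finset.mem_filter, Finset.mem_insert, Finset.mem_singleton]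
      constructor
      · rintro ⟨rfl | rfl | rfl, h⟩ <;> first | exact Or.inl rfl | exact Or.inr rfl | omega
      · rintro (rfl | rfl)
        · exact ⟨Or.inl rfl, by omega⟩
        · exact ⟨Or.inr (Or.inl rfl), h2⟩
    rw [this, Finset.card_insert_of_notMem (by simp [hxy]), Finset.card_singleton]
  have hmod : (f x + f y + f z) % 3 < 3 := Nat.mod_lt _ (by omega)
  split_ifs with hs0 hs1
  · ext a
    simp only [Finset.mem_filter, Finset.mem_insert, Finset.mem_singleton, hsum]
    constructor
    · rintro ⟨(rfl | rfl | rfl), h⟩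
      · rw [hrx, hs0] at h; omega
      · exact Or.inl rfl
      · exact Or.inr rfl
    · rintro (rfl | rfl)
      · exact ⟨Or.inr (Or.inl rfl), by rw [hry, hs0]; omega⟩
      · exact ⟨Or.inr (Or.inr rfl), by rw [hrz, hs0]; omega⟩
  · ext a
    simp only [Finset.mem_filter, Finset.mem_insert, Finset.mem_singleton, hsum]
    constructor
    · rintro ⟨(rfl | rfl | rfl), h⟩
      · exact Or.inl rfl
      · rw [hry, hs1] at h; omega
      · exact Or.inr rfl
    · rintro (rfl | rfl)
      · exact ⟨Or.inl rfl, by rw [hrx, hs1]; omega⟩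
      · exact ⟨Or.inr (Or.inr rfl), by rw [hrz, hs1]; omega⟩
  · ext a
    simp only [Finset.mem_filter, Finset.mem_insert, Finset.mem_singleton, hsum]
    constructor
    · rintro ⟨(rfl | rfl | rfl), h⟩
      · exact Or.inl rfl
      · exact Or.inr rfl
      · rw [hrz] at h; omega
    · rintro (rfl | rfl)
      · exact ⟨Or.inl rfl, by rw [hrx]; omega⟩
      · exact ⟨Or.inr (Or.inl rfl), by rw [hry]; omega⟩
/-- If `|S| = n` with `n ≡ 2 (mod 3)` and `n ≥ 3`, then there is a map `ξ`
from the `3`-subsets of `S` to the `2`-subsets of `S` with `ξ A ⊆ A`, such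
that every `2`-subset of `S` has exactly `(n-2)/3` preimages. -/
theorem regular_two_sampling_of_triples {α : Type*} [DecidableEq α]
    (S : Finset α) (n : ℕ) (hS : S.card = n) (hn : n % 3 = 2) (hn3 : 3 ≤ n) :
    ∃ ξ : Finset α → Finset α,
      (∀ A ∈ S.powersetCard 3, ξ A ⊆ A ∧ (ξ A).card = 2) ∧
      (∀ B ∈ S.powersetCard 2,
        ((S.powersetCard 3).filter (fun A => ξ A = B)).card = (n - 2) / 3) := by
  classical
  obtain ⟨idx, idx_lt, idx_inj, idx_surj⟩ :
      ∃ idx : α → ℕ, (∀ a ∈ S, idx a < n) ∧ (∀ a ∈ S, ∀ b ∈ S, idx a = idx b → a = b) ∧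
        (∀ k, k < n → ∃ a, a ∈ S ∧ idx a = k) := by
    have e : {x // x ∈ S} ≃ Fin n := S.equivFinOfCardEq hS
    refine ⟨fun a => if h : a ∈ S then (e ⟨a, h⟩ : ℕ) else n, ?_, ?_, ?_⟩
    · intro a ha; simp only [dif_pos ha]; exact (e ⟨a, ha⟩).isLt
    · intro a ha b hb h
      simp only [dif_pos ha, dif_pos hb] at h
      exact congrArg Subtype.val (e.injective (Fin.ext h))
    · intro k hk
      refine ⟨(e.symm ⟨k, hk⟩ : α), (e.symm ⟨k, hk⟩).2, ?_⟩
      simp only [dif_pos (e.symm ⟨k, hk⟩).2, Subtype.coe_eta, Equiv.apply_symm_apply]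
  set ξ0 : Finset α → Finset α := fun A =>
    A.filter (fun a => (A.filter (fun b => idx b < idx a)).card ≠ (A.sum idx) % 3) with hξ0
  have sorted : ∀ A : Finset α, A ⊆ S → A.card = 3 →
      ∃ x y z, x ∈ S ∧ y ∈ S ∧ z ∈ S ∧ idx x < idx y ∧ idx y < idx z ∧ A = {x, y, z} := by
    intro A hAS hA3
    obtain ⟨x, y, z, hxy, hxz, hyz, rfl⟩ := Finset.card_eq_three.mp hA3
    have hx : x ∈ S := hAS (by simp)
    have hy : y ∈ S := hAS (by simp)
    have hz : z ∈ S := hAS (by simp)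
    have d1 : idx x ≠ idx y := fun h => hxy (idx_inj _ hx _ hy h)
    have d2 : idx x ≠ idx z := fun h => hxz (idx_inj _ hx _ hz h)
    have d3 : idx y ≠ idx z := fun h => hyz (idx_inj _ hy _ hz h)
    rcases lt_trichotomy (idx x) (idx y) with h1 | h1 | h1 <;>
      rcases lt_trichotomy (idx y) (idx z) with h2 | h2 | h2 <;>
      rcases lt_trichotomy (idx x) (idx z) with h3 | h3 | h3 <;>
      first
        | (exfalso; omega)
        | exact ⟨x, y, z, hx, hy, hz, by omega, by omega, by ext a; simp; try tauto⟩
        | exact ⟨x, z, y, hx, hz, hy, by omega, by omega, by ext a; simp; try tauto⟩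
        | exact ⟨y, x, z, hy, hx, hz, by omega, by omega, by ext a; simp; try tauto⟩
        | exact ⟨y, z, x, hy, hz, hx, by omega, by omega, by ext a; simp; try tauto⟩
        | exact ⟨z, x, y, hz, hx, hy, by omega, by omega, by ext a; simp; try tauto⟩
        | exact ⟨z, y, x, hz, hy, hx, by omega, by omega, by ext a; simp; try tauto⟩
  refine ⟨ξ0, ?_, ?_⟩
  · intro A hA
    rw [Finset.mem_powersetCard] at hA
    obtain ⟨hAS, hA3⟩ := hA
    obtain ⟨x, y, z, hx, hy, hz, h1, h2, rfl⟩ := sorted A hAS hA3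
    have hxy : x ≠ y := fun h => by subst h; omega
    have hxz : x ≠ z := fun h => by subst h; omega
    have hyz : y ≠ z := fun h => by subst h; omega
    refine ⟨by rw [hξ0]; exact Finset.filter_subset _ _, ?_⟩
    rw [hξ0]
    simp only
    rw [xi_triple idx x y z h1 h2]
    split_ifs
    · exact Finset.card_pair hyz
    · exact Finset.card_pair hxz
    · exact Finset.card_pair hxy
  · have main2 : ∀ x ∈ S, ∀ y ∈ S, idx x < idx y →
        ((S.powersetCard 3).filter (fun A => ξ0 A = ({x, y} : Finset α))).card = (n - 2) / 3 := by
      intro x hx y hy hij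
      have hxy : x ≠ y := fun h => by subst h; omega
      obtain ⟨g, hg1⟩ : ∃ g : ℕ → α, ∀ k, k < n → g k ∈ S ∧ idx (g k) = k := by
        refine ⟨fun k => if h : k < n then (idx_surj k h).choose else x, ?_⟩
        intro k hk
        simp only [dif_pos hk]
        exact ⟨(idx_surj k hk).choose_spec.1, (idx_surj k hk).choose_spec.2⟩
      have hg2 : ∀ a ∈ S, g (idx a) = a := by
        intro a ha
        have h1 := hg1 (idx a) (idx_lt a ha)
        exact idx_inj _ h1.1 _ ha h1.2
      have xi_ins : ∀ z ∈ S, z ≠ x → z ≠ y →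
          (ξ0 (insert z {x, y}) = ({x, y} : Finset α) ↔
            (idx x + idx y + idx z) % 3
              = (if idx z < idx x then 0 else if idx z < idx y then 1 else 2)) := by
        intro z hz hzx hzy
        have hne1 : idx z ≠ idx x := fun h => hzx (idx_inj _ hz _ hx h)
        have hne2 : idx z ≠ idx y := fun h => hzy (idx_inj _ hz _ hy h)
        rw [hξ0]
        simp only
        rcases lt_trichotomy (idx z) (idx x) with hc | hc | hc
        · rw [show (insert z {x, y} : Finset α) = {z, x, y} from rfl]
          rw [xi_triple idx z x y hc hij]
          rw [if_pos hc]
          rw [show idx z + idx x + idx y = idx x + idx y + idx z from by ring]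
          split_ifs with h0 h1
          · simp [h0]
          · constructor
            · intro h
              exfalso
              have : z ∈ ({x, y} : Finset α) := by rw [← h]; simp
              simp only [Finset.mem_insert, Finset.mem_singleton] at this
              rcases this with rfl | rfl
              · exact hzx rfl
              · exact hzy rfl
            · intro h; omega
          · constructor
            · intro h
              exfalso
              have : z ∈ ({x, y} : Finset α) := by rw [← h]; simp
              simp only [Finset.mem_insert, Finset.mem_singleton] at this
              rcases this with rfl | rfl
              · exact hzx rfl
              · exact hzy rfl
            · intro h; omega
        · exact absurd hc hne1
        · rcases lt_trichotomy (idx z) (idx y) with hc2 | hc2 | hc2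
          · rw [show (insert z {x, y} : Finset α) = {x, z, y} from by ext a; simp; tauto]
            rw [xi_triple idx x z y hc hc2]
            rw [if_neg (show ¬ idx z < idx x from by omega), if_pos hc2]
            rw [show idx x + idx z + idx y = idx x + idx y + idx z from by ring]
            split_ifs with h0 h1
            · constructor
              · intro h
                exfalso
                have : z ∈ ({x, y} : Finset α) := by rw [← h]; simp
                simp only [Finset.mem_insert, Finset.mem_singleton] at this
                rcases this with rfl | rfl
                · exact hzx rfl
                · exact hzy rfl
              · intro h; omega
            · simp [h1]
            · constructor
              · intro h
                exfalso
                have : z ∈ ({x, y} : Finset α) := by rw [← h]; simp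
                simp only [Finset.mem_insert, Finset.mem_singleton] at this
                rcases this with rfl | rfl
                · exact hzx rfl
                · exact hzy rfl
              · intro h; omega
          · exact absurd hc2 hne2
          · rw [show (insert z {x, y} : Finset α) = {x, y, z} from by ext a; simp; tauto]
            rw [xi_triple idx x y z hij hc2]
            rw [if_neg (show ¬ idx z < idx x from by omega), if_neg (show ¬ idx z < idx y from by omega)]
            split_ifs with h0 h1
            · constructor
              · intro h
                exfalso
                have : z ∈ ({x, y} : Finset α) := by rw [← h]; simp
                simp only [Finset.mem_insert, Finset.mem_singleton] at this
                rcases this with rfl | rfl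
                · exact hzx rfl
                · exact hzy rfl
              · intro h; omega
            · constructor
              · intro h
                exfalso
                have : z ∈ ({x, y} : Finset α) := by rw [← h]; simp
                simp only [Finset.mem_insert, Finset.mem_singleton] at this
                rcases this with rfl | rfl
                · exact hzx rfl
                · exact hzy rfl
              · intro h; omega
            · constructor
              · intro _; omega
              · intro _; rfl
      have decomp : ∀ A, A ⊆ S → A.card = 3 → ξ0 A = ({x, y} : Finset α) →
          ∃ z, z ∈ S ∧ z ≠ x ∧ z ≠ y ∧ A = insert z {x, y} := by
        intro A hAS hA3 hfil
        have hsub : ({x, y} : Finset α) ⊆ A := by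
          rw [← hfil, hξ0]
          exact Finset.filter_subset _ _
        have hc1 : (A \ {x, y}).card = 1 := by
          rw [Finset.card_sdiff_of_subset hsub, hA3, Finset.card_pair hxy]
        obtain ⟨z, hzz⟩ := Finset.card_eq_one.mp hc1
        have hzA : z ∈ A \ ({x, y} : Finset α) := hzz ▸ Finset.mem_singleton_self z
        rw [Finset.mem_sdiff, Finset.mem_insert, Finset.mem_singleton] at hzA
        push_neg at hzA
        refine ⟨z, hAS hzA.1, hzA.2.1, hzA.2.2, ?_⟩
        have hu := Finset.union_sdiff_of_subset hsub
        rw [hzz] at hu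
        rw [← hu]
        ext a; simp; tauto
      have hsdiff : ∀ z : α, z ≠ x → z ≠ y →
          (insert z {x, y} : Finset α) \ {x, y} = {z} := by
        intro z hzx hzy
        rw [Finset.insert_sdiff_of_notMem _ (by simp [hzx, hzy]), Finset.sdiff_self]
        rfl
      rw [← key_count n (idx x) (idx y) hij (idx_lt y hy) hn]
      apply Finset.card_nbij' (fun A => (A \ ({x, y} : Finset α)).sum idx)
        (fun k => insert (g k) {x, y})
      · intro A hA
        rw [Finset.mem_coe, Finset.mem_filter, Finset.mem_powersetCard] at hA
        obtain ⟨⟨hAS, hA3⟩, hfil⟩ := hA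
        obtain ⟨z, hz, hzx, hzy, rfl⟩ := decomp A hAS hA3 hfil
        beta_reduce; rw [hsdiff z hzx hzy, Finset.sum_singleton]
        rw [Finset.mem_coe, Finset.mem_filter, Finset.mem_range]
        have hne1 : idx z ≠ idx x := fun h => hzx (idx_inj _ hz _ hx h)
        have hne2 : idx z ≠ idx y := fun h => hzy (idx_inj _ hz _ hy h)
        exact ⟨idx_lt z hz, hne1, hne2, (xi_ins z hz hzx hzy).mp hfil⟩
      · intro k hk
        rw [Finset.mem_coe, Finset.mem_filter, Finset.mem_range] at hk
        obtain ⟨hkn, hki, hkj, hkc⟩ := hk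
        obtain ⟨hgS, hgk⟩ := hg1 k hkn
        have hgx : g k ≠ x := fun h => hki (by rw [← hgk, h])
        have hgy : g k ≠ y := fun h => hkj (by rw [← hgk, h])
        rw [Finset.mem_coe, Finset.mem_filter, Finset.mem_powersetCard]
        refine ⟨⟨?_, ?_⟩, ?_⟩
        · exact Finset.insert_subset hgS (Finset.insert_subset hx (by simp [hy]))
        · rw [Finset.card_insert_of_notMem (by simp [hgx, hgy]), Finset.card_pair hxy]
        · rw [xi_ins (g k) hgS hgx hgy, hgk]
          exact hkc
      · intro A hA
        rw [Finset.mem_coe, Finset.mem_filter, Finset.mem_powersetCard] at hA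
        obtain ⟨⟨hAS, hA3⟩, hfil⟩ := hA
        obtain ⟨z, hz, hzx, hzy, rfl⟩ := decomp _ hAS hA3 hfil
        beta_reduce; rw [hsdiff z hzx hzy, Finset.sum_singleton, hg2 z hz]
      · intro k hk
        rw [Finset.mem_coe, Finset.mem_filter, Finset.mem_range] at hk
        obtain ⟨hkn, hki, hkj, _⟩ := hk
        obtain ⟨hgS, hgk⟩ := hg1 k hkn
        have hgx : g k ≠ x := fun h => hki (by rw [← hgk, h])
        have hgy : g k ≠ y := fun h => hkj (by rw [← hgk, h])
        beta_reduce; rw [hsdiff (g k) hgx hgy, Finset.sum_singleton, hgk]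
    intro B hB
    rw [Finset.mem_powersetCard] at hB
    obtain ⟨hBS, hB2⟩ := hB
    obtain ⟨x, y, hxy, rfl⟩ := Finset.card_eq_two.mp hB2
    have hx : x ∈ S := hBS (by simp)
    have hy : y ∈ S := hBS (by simp)
    have hne : idx x ≠ idx y := fun h => hxy (idx_inj _ hx _ hy h)
    rcases lt_trichotomy (idx x) (idx y) with h | h | h
    · exact main2 x hx y hy h
    · exact absurd h hne
    · rw [show ({x, y} : Finset α) = {y, x} from Finset.pair_comm x y]
      exact main2 y hy x hx h
end

section
/- If there exists a regular k₁-sampling ξ₁ of the k-subsets of S with redundancy λ₁, and a regular k₂-sampling ξ₂ of the k₁-subsets of S with redundancy λ₂, then the composition ξ₂ ∘ ξ₁ is a regular k₂-sampling of the k-subsets of S with redundancy λ₁·λ₂. -/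
/-- Composition of regular samplings: a regular `k₁`-sampling of the
`k`-subsets with redundancy `l₁` composed with a regular `k₂`-sampling of the
`k₁`-subsets with redundancy `l₂` is a regular `k₂`-sampling of the
`k`-subsets with redundancy `l₁ * l₂`. -/
theorem sampling_composition {α : Type*} [DecidableEq α] (S : Finset α)
    (k k₁ k₂ l₁ l₂ : ℕ)
    (ξ₁ ξ₂ : Finset α → Finset α)
    (h₁sub : ∀ A ∈ S.powersetCard k, ξ₁ A ⊆ A ∧ (ξ₁ A).card = k₁)
    (h₁reg : ∀ B ∈ S.powersetCard k₁,
      ((S.powersetCard k).filter (fun A => ξ₁ A = B)).card = l₁)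
    (h₂sub : ∀ B ∈ S.powersetCard k₁, ξ₂ B ⊆ B ∧ (ξ₂ B).card = k₂)
    (h₂reg : ∀ C ∈ S.powersetCard k₂,
      ((S.powersetCard k₁).filter (fun B => ξ₂ B = C)).card = l₂) :
    (∀ A ∈ S.powersetCard k, ξ₂ (ξ₁ A) ⊆ A ∧ (ξ₂ (ξ₁ A)).card = k₂) ∧
    (∀ C ∈ S.powersetCard k₂,
      ((S.powersetCard k).filter (fun A => ξ₂ (ξ₁ A) = C)).card = l₁ * l₂) := by
  have hmem : ∀ A ∈ S.powersetCard k, ξ₁ A ∈ S.powersetCard k₁ := by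
    intro A hA
    rw [Finset.mem_powersetCard] at hA ⊢
    exact ⟨(h₁sub A (Finset.mem_powersetCard.mpr hA)).1.trans hA.1,
      (h₁sub A (Finset.mem_powersetCard.mpr hA)).2⟩
  constructor
  · intro A hA
    exact ⟨((h₂sub _ (hmem A hA)).1).trans (h₁sub A hA).1, (h₂sub _ (hmem A hA)).2⟩
  · intro C hC
    have key : (S.powersetCard k).filter (fun A => ξ₂ (ξ₁ A) = C) =
        ((S.powersetCard k₁).filter (fun B => ξ₂ B = C)).biUnion
          (fun B => (S.powersetCard k).filter (fun A => ξ₁ A = B)) := by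
      ext A
      simp only [Finset.mem_biUnion, Finset.mem_filter]
      constructor
      · rintro ⟨hA, hξ⟩
        exact ⟨ξ₁ A, ⟨hmem A hA, hξ⟩, hA, rfl⟩
      · rintro ⟨B, ⟨_, hB⟩, hA, rfl⟩
        exact ⟨hA, hB⟩
    rw [key, Finset.card_biUnion]
    · rw [Finset.sum_congr rfl (fun B hB => h₁reg B (Finset.mem_filter.mp hB).1),
        Finset.sum_const, h₂reg C hC, smul_eq_mul, mul_comm]
    · intro B hB B' hB' hne
      rw [Function.onFun, Finset.disjoint_left]
      intro A h1 h2
      rw [Finset.mem_filter] at h1 h2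
      exact hne (h1.2 ▸ h2.2 ▸ rfl)
end

section
/- Let Δ be a finite bipartite graph with parts A and B such that every vertex of A has degree d and every vertex of B has degree e, with d, e > 0 and |A| > |B|, and set r = |A| − |B|. If d > (r−1)(e−1)/r, then there exists a surjection ξ: A → B such that every element of B has either one or two preimages under ξ, and ξ(a) is adjacent to a for every a ∈ A. -/
open Finset


/-- The `(1,2)`-semiregular sampling theorem in bipartite form: if `Δ` is a
finite bipartite graph with parts `A`, `B`, every vertex of `A` of degree `d`,
every vertex of `B` of degree `e`, `d, e > 0`, `|A| > |B|`, `r = |A| - |B|` and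
`d > (r-1)(e-1)/r` (stated integrally as `r * d > (r-1) * (e-1)`), then there
is a surjection `ξ : A → B` with `ξ a` adjacent to `a` for all `a`, all of
whose fibres have size one or two. -/
theorem semiregular_sampling_bipartite
    {A B : Type*} [Fintype A] [Fintype B] [DecidableEq A] [DecidableEq B]
    (adj : A → B → Prop) [∀ a b, Decidable (adj a b)] (d e r : ℕ) (hd : 0 < d) (he : 0 < e)
    (hcard : Fintype.card B < Fintype.card A)
    (hr : r = Fintype.card A - Fintype.card B)
    (hdegA : ∀ a : A, (Finset.univ.filter (fun b : B => adj a b)).card = d)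
    (hdegB : ∀ b : B, (Finset.univ.filter (fun a : A => adj a b)).card = e)
    (hdeg : r * d > (r - 1) * (e - 1)) :
    ∃ ξ : A → B, Function.Surjective ξ ∧ (∀ a : A, adj a (ξ a)) ∧
      ∀ b : B, 1 ≤ (Finset.univ.filter (fun a : A => ξ a = b)).card ∧
        (Finset.univ.filter (fun a : A => ξ a = b)).card ≤ 2 := by
  classical
  set m := Fintype.card B with hm
  set N : A → Finset B := fun a => univ.filter (fun b => adj a b) with hNdef
  -- A is nonempty
  have hApos : 0 < Fintype.card A := lt_of_le_of_lt (Nat.zero_le _) hcard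
  obtain ⟨a₀⟩ := Fintype.card_pos_iff.mp hApos
  -- m ≥ 1
  have hdm : d ≤ m := by
    have := hdegA a₀
    calc d = (N a₀).card := (hdegA a₀).symm
      _ ≤ (univ : Finset B).card := card_le_univ _
      _ = m := by rw [card_univ]
  have hmpos : 0 < m := lt_of_lt_of_le hd hdm
  -- card A = m + r, r ≥ 1
  have hcA : Fintype.card A = m + r := by omega
  have hrpos : 0 < r := by omega
  -- double counting: card A * d = m * e
  have hcount : Fintype.card A * d = m * e := by
    have key : ∑ a : A, (univ.filter (fun b => adj a b)).card
        = ∑ b : B, (univ.filter (fun a => adj a b)).card := by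
      simp only [Finset.card_filter]
      exact Finset.sum_comm
    simp only [hdegA, hdegB, Finset.sum_const, card_univ, smul_eq_mul] at key
    exact key
  -- e ≥ d
  have hde : d ≤ e := by
    have : m * d ≤ m * e := by
      calc m * d ≤ (m + r) * d := Nat.mul_le_mul_right d (Nat.le_add_right m r)
        _ = m * e := by rw [← hcA]; exact hcount
    exact Nat.le_of_mul_le_mul_left this hmpos
  -- m * (e - d) = r * d
  have hmed : m * (e - d) = r * d := by
    have h1 : m * d + r * d = m * e := by rw [← Nat.add_mul, ← hcA]; exact hcount
    have h2 : m * (e - d) + m * d = m * e := by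
      rw [← Nat.mul_add]; congr 1; omega
    omega
  -- r ≤ m
  have hrm : r ≤ m := by
    by_contra h
    push_neg at h
    have h1 : m ≤ r - 1 := by omega
    have h2 : e - d ≤ e - 1 := Nat.sub_le_sub_left hd e
    have : r * d ≤ (r - 1) * (e - 1) := by
      rw [← hmed]; exact Nat.mul_le_mul h1 h2
    omega
  -- e ≤ 2 * d
  have he2d : e ≤ 2 * d := by
    have : m * e ≤ m * (2 * d) := by
      have : (m + r) * d ≤ (m + m) * d := Nat.mul_le_mul_right d (by omega)
      calc m * e = (m + r) * d := by rw [← hcA]; exact hcount.symm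
        _ ≤ (m + m) * d := this
        _ = m * (2 * d) := by ring
    exact Nat.le_of_mul_le_mul_left this hmpos
  -- edge counting lemma
  have edge : ∀ S : Finset A, S.card * d ≤ (S.biUnion N).card * e := by
    intro S
    have h1 : ∑ a ∈ S, (N a).card = ∑ b : B, (S.filter (fun a => adj a b)).card := by
      simp only [hNdef, Finset.card_filter]
      exact Finset.sum_comm
    have h2 : ∑ b : B, (S.filter (fun a => adj a b)).card
        = ∑ b ∈ S.biUnion N, (S.filter (fun a => adj a b)).card := by
      refine (Finset.sum_subset (Finset.subset_univ _) ?_).symm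
      intro b _ hb
      rw [Finset.card_eq_zero, Finset.filter_eq_empty_iff]
      intro a ha hab
      exact hb (Finset.mem_biUnion.mpr ⟨a, ha, by simp [hNdef, hab]⟩)
    have h3 : ∑ a ∈ S, (N a).card = S.card * d := by
      simp [hNdef, hdegA, Finset.sum_const, smul_eq_mul]
    have h4 : ∀ b ∈ S.biUnion N, (S.filter (fun a => adj a b)).card ≤ e := by
      intro b _
      rw [← hdegB b]
      exact Finset.card_le_card (Finset.filter_subset_filter _ (Finset.subset_univ S))
    calc S.card * d = ∑ b ∈ S.biUnion N, (S.filter (fun a => adj a b)).card := by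
          rw [← h3, h1, h2]
      _ ≤ ∑ _b ∈ S.biUnion N, e := Finset.sum_le_sum h4
      _ = (S.biUnion N).card * e := by rw [Finset.sum_const, smul_eq_mul]
  -- Hall setup
  set t : (A ⊕ Fin (m - r)) → Finset (B × Bool) :=
    Sum.elim (fun a => (N a) ×ˢ (univ : Finset Bool)) (fun _ => (univ : Finset B) ×ˢ {true})
    with htdef
  have hall : ∀ s : Finset (A ⊕ Fin (m - r)), s.card ≤ (s.biUnion t).card := by
    intro s
    set sA := s.toLeft with hsA
    set T := sA.biUnion N with hT
    have hTsub : T ×ˢ (univ : Finset Bool) ⊆ s.biUnion t := by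
      intro p hp
      rw [Finset.mem_product] at hp
      obtain ⟨a, ha, hpa⟩ := Finset.mem_biUnion.mp hp.1
      exact Finset.mem_biUnion.mpr ⟨Sum.inl a, Finset.mem_toLeft.mp ha,
        by simp [htdef, Finset.mem_product, hpa]⟩
    have hcardeq : s.toLeft.card + s.toRight.card = s.card := Finset.card_toLeft_add_card_toRight
    rcases Finset.eq_empty_or_nonempty s.toRight with hR | hR
    · -- no dummies
      have hs : s.card = sA.card := by rw [← hcardeq, hR]; simp; rfl
      have hcT : (T ×ˢ (univ : Finset Bool)).card = T.card * 2 := by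
        rw [Finset.card_product]; simp
      have h2 : sA.card ≤ T.card * 2 := by
        have h1 := edge sA
        have h2 : T.card * e ≤ T.card * (2 * d) := Nat.mul_le_mul_left _ he2d
        have : sA.card * d ≤ (T.card * 2) * d := by
          calc sA.card * d ≤ T.card * e := h1
            _ ≤ T.card * (2 * d) := h2
            _ = (T.card * 2) * d := by ring
        exact Nat.le_of_mul_le_mul_right this hd
      calc s.card = sA.card := hs
        _ ≤ T.card * 2 := h2
        _ = (T ×ˢ (univ : Finset Bool)).card := hcT.symm
        _ ≤ (s.biUnion t).card := Finset.card_le_card hTsub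
    · -- some dummy present
      obtain ⟨j, hj⟩ := hR
      have htrue : (univ : Finset B) ×ˢ {true} ⊆ s.biUnion t := by
        intro p hp
        rw [Finset.mem_product] at hp
        refine Finset.mem_biUnion.mpr ⟨Sum.inr j, Finset.mem_toRight.mp hj, ?_⟩
        simp only [htdef, Sum.elim_inr]
        exact Finset.mem_product.mpr ⟨Finset.mem_univ _, hp.2⟩
      have hfalse : T ×ˢ ({false} : Finset Bool) ⊆ s.biUnion t := by
        intro p hp
        rw [Finset.mem_product] at hp
        exact hTsub (Finset.mem_product.mpr ⟨hp.1, Finset.mem_univ _⟩)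
      have hdisj : Disjoint (T ×ˢ ({false} : Finset Bool)) ((univ : Finset B) ×ˢ {true}) := by
        rw [Finset.disjoint_left]
        intro p hp hq
        have h1 : p.2 = false := Finset.mem_singleton.mp (Finset.mem_product.mp hp).2
        have h2 : p.2 = true := Finset.mem_singleton.mp (Finset.mem_product.mp hq).2
        simp [h1] at h2
      have hunion : (T ×ˢ ({false} : Finset Bool)) ∪ ((univ : Finset B) ×ˢ {true})
          ⊆ s.biUnion t := Finset.union_subset hfalse htrue
      have hcardu : T.card + m ≤ (s.biUnion t).card := by
        have := Finset.card_le_card hunion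
        rwa [Finset.card_union_of_disjoint hdisj, Finset.card_product, Finset.card_product,
          Finset.card_singleton, Finset.card_singleton, mul_one, mul_one, card_univ] at this
      -- main inequality: sA.card ≤ T.card + r
      have hAle : sA.card ≤ m + r := by
        calc sA.card ≤ Fintype.card A := Finset.card_le_univ _
          _ = m + r := hcA
      have hmain : sA.card ≤ T.card + r := by
        have h1 := edge sA
        have key : e * sA.card ≤ e * (T.card + r) := by
          have hsplit : e * sA.card = (e - d) * sA.card + d * sA.card := by
            rw [← Nat.add_mul]; congr 1; omega
          have hb1 : (e - d) * sA.card ≤ (e - d) * (m + r) :=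
            Nat.mul_le_mul_left _ hAle
          have hb2 : (e - d) * (m + r) = r * e := by
            have hsum : m * (e - d) + r * (e - d) = (e - d) * (m + r) := by ring
            have h3 : r * (e - d) + r * d = r * e := by
              rw [← Nat.mul_add]; congr 1; omega
            omega
          calc e * sA.card = (e - d) * sA.card + d * sA.card := hsplit
            _ ≤ (e - d) * (m + r) + T.card * e := by
                exact Nat.add_le_add hb1 (by rw [mul_comm d sA.card]; exact h1)
            _ = r * e + T.card * e := by rw [hb2]
            _ = e * (T.card + r) := by ring
        exact Nat.le_of_mul_le_mul_left key he
      have hDle : s.toRight.card ≤ m - r := by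
        calc s.toRight.card ≤ Fintype.card (Fin (m - r)) := Finset.card_le_univ _
          _ = m - r := Fintype.card_fin _
      calc s.card = sA.card + s.toRight.card := hcardeq.symm
        _ ≤ (T.card + r) + (m - r) := Nat.add_le_add hmain hDle
        _ = T.card + m := by omega
        _ ≤ (s.biUnion t).card := hcardu
  obtain ⟨f, hfinj, hft⟩ := (Finset.all_card_le_biUnion_card_iff_exists_injective t).mp hall
  -- f is bijective
  have hcards : Fintype.card (A ⊕ Fin (m - r)) = Fintype.card (B × Bool) := by
    simp [Fintype.card_sum, Fintype.card_prod, hcA]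
    omega
  have hfbij : Function.Bijective f :=
    (Fintype.bijective_iff_injective_and_card f).mpr ⟨hfinj, hcards⟩
  set ξ : A → B := fun a => (f (Sum.inl a)).1 with hξ
  have hadj : ∀ a : A, adj a (ξ a) := by
    intro a
    have := hft (Sum.inl a)
    simp only [htdef, Sum.elim_inl] at this
    rw [Finset.mem_product] at this
    have := this.1
    simp [hNdef] at this
    exact this
  have hsurj : Function.Surjective ξ := by
    intro b
    obtain ⟨x, hx⟩ := hfbij.2 (b, false)
    cases x with
    | inl a =>
        exact ⟨a, by rw [hξ]; simp [hx]⟩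
    | inr j =>
        exfalso
        have := hft (Sum.inr j)
        simp only [htdef, Sum.elim_inr] at this
        rw [Finset.mem_product] at this
        rw [hx] at this
        simp at this
  refine ⟨ξ, hsurj, hadj, ?_⟩
  intro b
  constructor
  · obtain ⟨a, ha⟩ := hsurj b
    exact Finset.card_pos.mpr ⟨a, by simp [ha]⟩
  · have hinj : Set.InjOn (fun a => (f (Sum.inl a)).2)
        (univ.filter (fun a : A => ξ a = b)) := by
      intro a1 h1 a2 h2 hsnd
      simp only [Finset.coe_filter, Set.mem_setOf_eq] at h1 h2
      have : f (Sum.inl a1) = f (Sum.inl a2) := by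
        apply Prod.ext
        · exact h1.2.trans h2.2.symm
        · exact hsnd
      exact Sum.inl.inj (hfinj this)
    calc (univ.filter (fun a : A => ξ a = b)).card
        ≤ (univ : Finset Bool).card := Finset.card_le_card_of_injOn _ (fun a _ => Finset.mem_univ _) hinj
      _ = 2 := by simp
end

section
/- Let S be a finite set with |S| = n, and let k' ≤ k ≤ n, with λ = ⌊C(n,k)/C(n,k')⌋. Then there exists a map ξ from the k-subsets of S to the k'-subsets of S with ξ(A) ⊆ A for every A, such that every k'-subset of S has at least λ preimages under ξ. -/
open Finset FinsetFamily

private lemma up_lym_step {β : Type*} [DecidableEq β] [Fintype β] {𝒜 : Finset (Finset β)} {r : ℕ}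
    (hr : r < Fintype.card β) (h : (𝒜 : Set (Finset β)).Sized r) :
    𝒜.card * (Fintype.card β).choose (r + 1) ≤ (∂⁺ 𝒜).card * (Fintype.card β).choose r := by
  set n := Fintype.card β with hn
  have hc : (𝒜ᶜˢ : Set (Finset β)).Sized (n - r) := h.compls
  have key := Finset.card_mul_le_card_shadow_mul hc
  rw [Finset.shadow_compls, Finset.card_compls, Finset.card_compls] at key
  have h1 : n - (n - r) + 1 = r + 1 := by omega
  rw [h1] at key
  -- key : 𝒜.card * (n - r) ≤ (∂⁺ 𝒜).card * (r + 1)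
  have hch : n.choose (r + 1) * (r + 1) = n.choose r * (n - r) := Nat.choose_succ_right_eq n r
  have : 𝒜.card * n.choose (r + 1) * (r + 1) ≤ (∂⁺ 𝒜).card * n.choose r * (r + 1) := by
    calc 𝒜.card * n.choose (r + 1) * (r + 1) = 𝒜.card * (n - r) * n.choose r := by
          rw [mul_assoc, hch]; ring
      _ ≤ (∂⁺ 𝒜).card * (r + 1) * n.choose r := Nat.mul_le_mul_right _ key
      _ = (∂⁺ 𝒜).card * n.choose r * (r + 1) := by ring
  exact Nat.le_of_mul_le_mul_right this (Nat.succ_pos r)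

private lemma sized_up_iter {β : Type*} [DecidableEq β] [Fintype β] {𝒜 : Finset (Finset β)}
    {r : ℕ} (h : (𝒜 : Set (Finset β)).Sized r) (j : ℕ) :
    ((∂⁺^[j] 𝒜 : Finset (Finset β)) : Set (Finset β)).Sized (r + j) := by
  induction j with
  | zero => simpa using h
  | succ j ih =>
    rw [Function.iterate_succ_apply']
    exact (ih.upShadow :)

private lemma up_lym_iter {β : Type*} [DecidableEq β] [Fintype β] {𝒜 : Finset (Finset β)}
    {r : ℕ} (h : (𝒜 : Set (Finset β)).Sized r) (j : ℕ) (hj : r + j ≤ Fintype.card β) :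
    𝒜.card * (Fintype.card β).choose (r + j) ≤ (∂⁺^[j] 𝒜).card * (Fintype.card β).choose r := by
  set n := Fintype.card β with hn
  induction j with
  | zero => simp
  | succ j ih =>
    have hj' : r + j ≤ n := by omega
    have ih' := ih hj'
    have hstep := up_lym_step (𝒜 := ∂⁺^[j] 𝒜) (r := r + j) (by omega) (sized_up_iter h j)
    rw [← Function.iterate_succ_apply' upShadow j 𝒜] at hstep
    have hpos : 0 < n.choose (r + j) := Nat.choose_pos hj'
    have : 𝒜.card * n.choose (r + (j+1)) * n.choose (r + j)
        ≤ (∂⁺^[j+1] 𝒜).card * n.choose r * n.choose (r + j) := by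
      calc 𝒜.card * n.choose (r + (j+1)) * n.choose (r + j)
          = (𝒜.card * n.choose (r + j)) * n.choose (r + (j+1)) := by ring
        _ ≤ ((∂⁺^[j] 𝒜).card * n.choose r) * n.choose (r + (j+1)) :=
            Nat.mul_le_mul_right _ ih'
        _ = ((∂⁺^[j] 𝒜).card * n.choose ((r + j) + 1)) * n.choose r := by
            rw [show r + (j+1) = (r + j) + 1 from rfl]; ring
        _ ≤ ((∂⁺^[j+1] 𝒜).card * n.choose (r + j)) * n.choose r :=
            Nat.mul_le_mul_right _ hstep
        _ = (∂⁺^[j+1] 𝒜).card * n.choose r * n.choose (r + j) := by ring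
    exact Nat.le_of_mul_le_mul_right this hpos

private lemma sampling_beta {β : Type*} [DecidableEq β] [Fintype β]
    (n k k' l : ℕ) (hn : Fintype.card β = n) (hk' : k' ≤ k) (hk : k ≤ n)
    (hl : l = n.choose k / n.choose k') :
    ∃ ξ : Finset β → Finset β,
      (∀ A : Finset β, A.card = k → ξ A ⊆ A ∧ (ξ A).card = k') ∧
      (∀ B : Finset β, B.card = k' →
        l ≤ (((univ : Finset β).powersetCard k).filter (fun A => ξ A = B)).card) := by
  classical
  set ι := {B : Finset β // B.card = k'} × Fin l with hι
  set t : ι → Finset (Finset β) := fun p => ((univ : Finset β).powersetCard k).filter (fun A => p.1.1 ⊆ A)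
    with ht
  have hall : ∀ s : Finset ι, s.card ≤ (s.biUnion t).card := by
    intro s
    set T := s.image (fun p => p.1.1) with hT
    have hTsized : (T : Set (Finset β)).Sized k' := by
      intro B hB
      simp only [hT, coe_image, Set.mem_image, mem_coe] at hB
      obtain ⟨p, _, rfl⟩ := hB
      exact p.1.2
    have h1 : s.card ≤ T.card * l := by
      have hinj : Set.InjOn (fun p : ι => (p.1.1, p.2)) s := by
        intro p _ q _ hpq
        simp only [Prod.mk.injEq] at hpq
        exact Prod.ext (Subtype.ext hpq.1) hpq.2
      calc s.card = (s.image (fun p : ι => (p.1.1, p.2))).card :=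
            (Finset.card_image_of_injOn hinj).symm
        _ ≤ (T ×ˢ (univ : Finset (Fin l))).card := by
            apply Finset.card_le_card
            intro x hx
            simp only [mem_image] at hx
            obtain ⟨p, hp, rfl⟩ := hx
            exact Finset.mem_product.2 ⟨Finset.mem_image_of_mem _ hp, Finset.mem_univ _⟩
        _ = T.card * l := by rw [Finset.card_product, Finset.card_univ, Fintype.card_fin]
    have h2 : (∂⁺^[k - k'] T) ⊆ s.biUnion t := by
      intro U hU
      have hUcard : U.card = k := by
        have := sized_up_iter hTsized (k - k') hU
        omega
      obtain ⟨B, hB, hBU, -⟩ := Finset.mem_upShadow_iterate_iff_exists_sdiff.1 hU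
      simp only [hT, mem_image] at hB
      obtain ⟨p, hp, rfl⟩ := hB
      refine Finset.mem_biUnion.2 ⟨p, hp, ?_⟩
      simp only [ht, mem_filter, Finset.mem_powersetCard_univ]
      exact ⟨hUcard, hBU⟩
    have h3 := up_lym_iter hTsized (k - k') (by rw [hn]; omega)
    rw [hn, Nat.add_sub_cancel' hk'] at h3
    have h4 : l * n.choose k' ≤ n.choose k := by
      rw [hl]; exact Nat.div_mul_le_self _ _
    have hpos : 0 < n.choose k' := Nat.choose_pos (le_trans hk' hk)
    have h5 : T.card * l ≤ (s.biUnion t).card := by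
      have : T.card * l * n.choose k' ≤ (s.biUnion t).card * n.choose k' := by
        calc T.card * l * n.choose k' = T.card * (l * n.choose k') := by ring
          _ ≤ T.card * n.choose k := Nat.mul_le_mul_left _ h4
          _ ≤ (∂⁺^[k - k'] T).card * n.choose k' := h3
          _ ≤ (s.biUnion t).card * n.choose k' :=
              Nat.mul_le_mul_right _ (Finset.card_le_card h2)
      exact Nat.le_of_mul_le_mul_right this hpos
    exact le_trans h1 h5
  obtain ⟨f, hfinj, hf⟩ := (Finset.all_card_le_biUnion_card_iff_exists_injective t).1 hall
  have hfmem : ∀ p : ι, (f p).card = k ∧ p.1.1 ⊆ f p := by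
    intro p
    have := hf p
    simp only [ht, mem_filter, Finset.mem_powersetCard_univ] at this
    exact this
  set ξ : Finset β → Finset β := fun A =>
    if h : ∃ p : ι, f p = A then h.choose.1.1
    else (A.exists_subset_card_eq (n := min k' A.card) (min_le_right _ _)).choose with hξ
  refine ⟨ξ, ?_, ?_⟩
  · intro A hA
    by_cases h : ∃ p : ι, f p = A
    · have hch : f h.choose = A := h.choose_spec
      have hsub : h.choose.1.1 ⊆ A := by
        have h2 := (hfmem h.choose).2
        rwa [hch] at h2
      have hcard : (h.choose.1.1 : Finset β).card = k' := h.choose.1.2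
      simp only [hξ, dif_pos h]
      exact ⟨hsub, hcard⟩
    · have hspec := (A.exists_subset_card_eq (n := min k' A.card) (min_le_right _ _)).choose_spec
      simp only [hξ, dif_neg h]
      refine ⟨hspec.1, ?_⟩
      rw [hspec.2, hA, min_eq_left hk']
  · intro B hB
    set g : Fin l → Finset β := fun i => f (⟨B, hB⟩, i) with hg
    have hginj : Function.Injective g := by
      intro i j hij
      have := hfinj hij
      exact (Prod.ext_iff.1 this).2
    have himg : (univ : Finset (Fin l)).image g ⊆
        ((univ : Finset β).powersetCard k).filter (fun A => ξ A = B) := by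
      intro A hA
      simp only [mem_image] at hA
      obtain ⟨i, -, rfl⟩ := hA
      have h1 : (g i).card = k := (hfmem _).1
      have h2 : ∃ p : ι, f p = g i := ⟨(⟨B, hB⟩, i), rfl⟩
      have h3 : ξ (g i) = B := by
        simp only [hξ, dif_pos h2]
        have := hfinj h2.choose_spec
        rw [this]
      refine Finset.mem_filter.2 ⟨Finset.mem_powersetCard_univ.2 h1, h3⟩
    calc l = ((univ : Finset (Fin l)).image g).card := by
          rw [Finset.card_image_of_injective _ hginj, Finset.card_univ, Fintype.card_fin]
      _ ≤ _ := Finset.card_le_card himg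

/-- Let `|S| = n`, `k' ≤ k ≤ n`, and `l = ⌊C(n,k)/C(n,k')⌋`.  Then there is a
sampling `ξ` from the `k`-subsets of `S` to the `k'`-subsets of `S` (with
`ξ A ⊆ A`) such that every `k'`-subset has at least `l` preimages. -/
theorem sampling_with_floor_redundancy {α : Type*} [DecidableEq α]
    (S : Finset α) (n k k' l : ℕ) (hS : S.card = n) (hk' : k' ≤ k) (hk : k ≤ n)
    (hl : l = n.choose k / n.choose k') :
    ∃ ξ : Finset α → Finset α,
      (∀ A ∈ S.powersetCard k, ξ A ⊆ A ∧ (ξ A).card = k') ∧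
      (∀ B ∈ S.powersetCard k',
        l ≤ ((S.powersetCard k).filter (fun A => ξ A = B)).card) := by
  classical
  have hcard : Fintype.card {x // x ∈ S} = n := by rw [Fintype.card_coe, hS]
  obtain ⟨ξ₀, hξ₀sub, hξ₀fib⟩ := sampling_beta n k k' l hcard hk' hk hl
  set e : {x // x ∈ S} ↪ α := Function.Embedding.subtype _ with he
  have fact1 : ∀ A₀ : Finset {x // x ∈ S}, (A₀.map e).subtype (· ∈ S) = A₀ := by
    intro A₀
    ext x
    simp [he, Finset.mem_subtype, Finset.mem_map, Function.Embedding.coe_subtype,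
      Subtype.coe_inj]
  have fact2 : ∀ A : Finset α, A ⊆ S → (A.subtype (· ∈ S)).map e = A := by
    intro A hA
    rw [he, Finset.subtype_map]
    exact Finset.filter_true_of_mem (fun x hx => hA hx)
  have fact3 : ∀ A₀ : Finset {x // x ∈ S}, (A₀.map e : Finset α) ⊆ S := by
    intro A₀ x hx
    simp only [he, Finset.mem_map, Function.Embedding.coe_subtype] at hx
    obtain ⟨y, -, rfl⟩ := hx
    exact y.2
  refine ⟨fun A => (ξ₀ (A.subtype (· ∈ S))).map e, ?_, ?_⟩
  · intro A hA
    rw [Finset.mem_powersetCard] at hA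
    obtain ⟨hAS, hAcard⟩ := hA
    set A₀ := A.subtype (· ∈ S) with hA₀
    have hmap : A₀.map e = A := fact2 A hAS
    have hA₀card : A₀.card = k := by
      have := Finset.card_map e (s := A₀)
      rw [hmap] at this
      omega
    obtain ⟨hsub, hcard⟩ := hξ₀sub A₀ hA₀card
    constructor
    · calc (ξ₀ A₀).map e ⊆ A₀.map e := Finset.map_subset_map.2 hsub
        _ = A := hmap
    · rw [Finset.card_map, hcard]
  · intro B hB
    rw [Finset.mem_powersetCard] at hB
    obtain ⟨hBS, hBcard⟩ := hB
    set B₀ := B.subtype (· ∈ S) with hB₀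
    have hmapB : B₀.map e = B := fact2 B hBS
    have hB₀card : B₀.card = k' := by
      have := Finset.card_map e (s := B₀)
      rw [hmapB] at this
      omega
    have hfib := hξ₀fib B₀ hB₀card
    refine le_trans hfib ?_
    rw [← Finset.card_image_of_injective _ (Finset.map_injective e)]
    apply Finset.card_le_card
    intro A hA
    simp only [mem_image] at hA
    obtain ⟨A₀, hA₀, rfl⟩ := hA
    rw [Finset.mem_filter, Finset.mem_powersetCard_univ] at hA₀
    obtain ⟨hA₀card, hA₀ξ⟩ := hA₀
    refine Finset.mem_filter.2 ⟨?_, ?_⟩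
    · exact Finset.mem_powersetCard.2 ⟨fact3 A₀, by rw [Finset.card_map, hA₀card]⟩
    · show (ξ₀ (((A₀.map e).subtype (· ∈ S)))).map e = B
      rw [fact1 A₀, hA₀ξ, hmapB]
end

section
/- Let S be a finite set with |S| = n and suppose C(n,k) = λ·C(n,k') + 1 for some natural numbers λ ≥ 1 and k' ≤ k ≤ n. Then there exists a sampling ξ from the k-subsets to the k'-subsets of S (ξ(A) ⊆ A) in which every k'-subset has either λ or λ + 1 preimages. -/
/-- If `C(n,k) = l * C(n,k') + 1` with `l ≥ 1`, `k' ≤ k ≤ n`, `|S| = n`, then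
there is a `(l, l+1)`-semiregular sampling from the `k`-subsets to the
`k'`-subsets of `S`: every `k'`-subset has either `l` or `l + 1` preimages. -/
theorem semiregular_sampling_remainder_one {α : Type*} [DecidableEq α]
    (S : Finset α) (n k k' l : ℕ) (hS : S.card = n) (hl : 1 ≤ l)
    (hk' : k' ≤ k) (hk : k ≤ n) (h : n.choose k = l * n.choose k' + 1) :
    ∃ ξ : Finset α → Finset α,
      (∀ A ∈ S.powersetCard k, ξ A ⊆ A ∧ (ξ A).card = k') ∧
      (∀ B ∈ S.powersetCard k',
        ((S.powersetCard k).filter (fun A => ξ A = B)).card = l ∨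
        ((S.powersetCard k).filter (fun A => ξ A = B)).card = l + 1) := by
  classical
  subst hS
  set n := S.card with hn
  have hk'n : k' ≤ n := hk'.trans hk
  have hck' : 0 < n.choose k' := Nat.choose_pos hk'n
  have hckk' : 0 < k.choose k' := Nat.choose_pos hk'
  have hpk'card : (S.powersetCard k').card = n.choose k' := by
    rw [Finset.card_powersetCard]
  have hpkcard : (S.powersetCard k).card = n.choose k := by
    rw [Finset.card_powersetCard]
  obtain ⟨B₀, hB₀⟩ : (S.powersetCard k').Nonempty := by
    rw [← Finset.card_pos, hpk'card]; exact hck'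
  -- the slot system
  set t : {A // A ∈ S.powersetCard k} → Finset (Finset α × ℕ) :=
    fun A => (A.1.powersetCard k') ×ˢ Finset.range l ∪
      (if B₀ ⊆ A.1 then {(B₀, l)} else ∅) with ht
  -- Hall condition
  have hall : ∀ s : Finset {A // A ∈ S.powersetCard k}, s.card ≤ (s.biUnion t).card := by
    intro s
    set 𝒜 : Finset (Finset α) := s.image Subtype.val with h𝒜
    have h𝒜card : 𝒜.card = s.card := Finset.card_image_of_injective s Subtype.val_injective
    have h𝒜pk : 𝒜 ⊆ S.powersetCard k := by
      intro A hA
      obtain ⟨a, _, rfl⟩ := Finset.mem_image.mp hA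
      exact a.2
    set ℬ : Finset (Finset α) := 𝒜.biUnion (fun A => A.powersetCard k') with hℬ
    have hℬpk' : ℬ ⊆ S.powersetCard k' := by
      intro B hB
      obtain ⟨A, hA, hBA⟩ := Finset.mem_biUnion.mp hB
      rw [Finset.mem_powersetCard] at hBA ⊢
      exact ⟨hBA.1.trans (Finset.mem_powersetCard.mp (h𝒜pk hA)).1, hBA.2⟩
    -- double counting (local LYM)
    have swap : ∑ A ∈ 𝒜, (ℬ.filter fun B => B ⊆ A).card
        = ∑ B ∈ ℬ, (𝒜.filter fun A => B ⊆ A).card := by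
      simp_rw [Finset.card_filter]
      exact Finset.sum_comm
    have lhs_lb : 𝒜.card * k.choose k' ≤ ∑ A ∈ 𝒜, (ℬ.filter fun B => B ⊆ A).card := by
      calc 𝒜.card * k.choose k' = ∑ _A ∈ 𝒜, k.choose k' := by
            rw [Finset.sum_const, smul_eq_mul]
        _ ≤ _ := by
            apply Finset.sum_le_sum
            intro A hA
            have hsub : A.powersetCard k' ⊆ ℬ.filter fun B => B ⊆ A := by
              intro B hB
              refine Finset.mem_filter.mpr ⟨Finset.mem_biUnion.mpr ⟨A, hA, hB⟩, ?_⟩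
              exact (Finset.mem_powersetCard.mp hB).1
            have hcard : (A.powersetCard k').card = k.choose k' := by
              rw [Finset.card_powersetCard, (Finset.mem_powersetCard.mp (h𝒜pk hA)).2]
            exact hcard ▸ Finset.card_le_card hsub
    have rhs_ub : ∑ B ∈ ℬ, (𝒜.filter fun A => B ⊆ A).card
        ≤ ℬ.card * (n - k').choose (k - k') := by
      calc ∑ B ∈ ℬ, (𝒜.filter fun A => B ⊆ A).card
          ≤ ∑ _B ∈ ℬ, (n - k').choose (k - k') := by
            apply Finset.sum_le_sum
            intro B hB
            obtain ⟨hBS, hBcard⟩ := Finset.mem_powersetCard.mp (hℬpk' hB)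
            have : ((S \ B).powersetCard (k - k')).card = (n - k').choose (k - k') := by
              rw [Finset.card_powersetCard, Finset.card_sdiff_of_subset hBS, hBcard]
            rw [← this]
            apply Finset.card_le_card_of_injOn (fun A => A \ B)
            · intro A hA
              rw [Finset.mem_coe, Finset.mem_filter] at hA
              obtain ⟨hAS, hAcard⟩ := Finset.mem_powersetCard.mp (h𝒜pk hA.1)
              refine Finset.mem_powersetCard.mpr ⟨Finset.sdiff_subset_sdiff hAS le_rfl, ?_⟩
              rw [Finset.card_sdiff_of_subset hA.2, hAcard, hBcard]
            · intro A₁ h₁ A₂ h₂ hEq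
              rw [Finset.mem_coe, Finset.mem_filter] at h₁ h₂
              have e₁ := Finset.sdiff_union_of_subset h₁.2
              have e₂ := Finset.sdiff_union_of_subset h₂.2
              have hEq' : A₁ \ B = A₂ \ B := hEq
              rw [← e₁, ← e₂, hEq']
        _ = ℬ.card * (n - k').choose (k - k') := by
            rw [Finset.sum_const, smul_eq_mul]
    -- the LYM inequality
    have key : 𝒜.card * n.choose k' ≤ ℬ.card * n.choose k := by
      have h1 : 𝒜.card * k.choose k' ≤ ℬ.card * (n - k').choose (k - k') :=
        le_trans lhs_lb (swap ▸ rhs_ub)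
      have h2 : 𝒜.card * n.choose k' * k.choose k' ≤ ℬ.card * n.choose k * k.choose k' := by
        calc 𝒜.card * n.choose k' * k.choose k'
            = (𝒜.card * k.choose k') * n.choose k' := by ring
          _ ≤ (ℬ.card * (n - k').choose (k - k')) * n.choose k' :=
              Nat.mul_le_mul_right _ h1
          _ = ℬ.card * (n.choose k' * (n - k').choose (k - k')) := by ring
          _ = ℬ.card * (n.choose k * k.choose k') := by
              rw [← Nat.choose_mul (n := n) hk']
          _ = ℬ.card * n.choose k * k.choose k' := by ring
      exact Nat.le_of_mul_le_mul_right h2 hckk'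
    -- the slots below ℬ are in the biUnion
    have hsub1 : ℬ ×ˢ Finset.range l ⊆ s.biUnion t := by
      rintro ⟨B, i⟩ hBi
      rw [Finset.mem_product] at hBi
      obtain ⟨A, hA, hBA⟩ := Finset.mem_biUnion.mp hBi.1
      obtain ⟨a, ha, rfl⟩ := Finset.mem_image.mp hA
      refine Finset.mem_biUnion.mpr ⟨a, ha, Finset.mem_union_left _ ?_⟩
      exact Finset.mem_product.mpr ⟨hBA, hBi.2⟩
    rw [← h𝒜card]
    by_cases hfull : ℬ.card = n.choose k'
    · -- ℬ is everything; use the extra slot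
      have hℬeq : ℬ = S.powersetCard k' :=
        Finset.eq_of_subset_of_card_le hℬpk' (by rw [hpk'card, hfull])
      have hB₀ℬ : B₀ ∈ ℬ := hℬeq ▸ hB₀
      obtain ⟨A, hA, hB₀A⟩ := Finset.mem_biUnion.mp hB₀ℬ
      obtain ⟨a, ha, rfl⟩ := Finset.mem_image.mp hA
      have hextra : (B₀, l) ∈ s.biUnion t := by
        refine Finset.mem_biUnion.mpr ⟨a, ha, Finset.mem_union_right _ ?_⟩
        rw [if_pos (Finset.mem_powersetCard.mp hB₀A).1]
        exact Finset.mem_singleton_self _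
      have hnotin : (B₀, l) ∉ ℬ ×ˢ Finset.range l := by
        intro hmem
        exact absurd (Finset.mem_product.mp hmem).2 (by simp)
      calc 𝒜.card ≤ n.choose k := hpkcard ▸ Finset.card_le_card h𝒜pk
        _ = l * n.choose k' + 1 := h
        _ = (insert (B₀, l) (ℬ ×ˢ Finset.range l)).card := by
            rw [Finset.card_insert_of_notMem hnotin, Finset.card_product,
              Finset.card_range, hfull]
            ring
        _ ≤ (s.biUnion t).card := by
            apply Finset.card_le_card
            intro p hp
            rcases Finset.mem_insert.mp hp with rfl | hp
            · exact hextra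
            · exact hsub1 hp
    · -- ℬ is not everything; LYM suffices
      have hℬlt : ℬ.card < n.choose k' :=
        lt_of_le_of_ne (hpk'card ▸ Finset.card_le_card hℬpk') hfull
      have : 𝒜.card * n.choose k' < (l * ℬ.card + 1) * n.choose k' := by
        calc 𝒜.card * n.choose k' ≤ ℬ.card * n.choose k := key
          _ = ℬ.card * (l * n.choose k' + 1) := by rw [h]
          _ = l * ℬ.card * n.choose k' + ℬ.card := by ring
          _ < l * ℬ.card * n.choose k' + n.choose k' := by omega
          _ = (l * ℬ.card + 1) * n.choose k' := by ring
      have h𝒜le : 𝒜.card ≤ l * ℬ.card := by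
        have := Nat.lt_of_mul_lt_mul_right this
        omega
      calc 𝒜.card ≤ l * ℬ.card := h𝒜le
        _ = (ℬ ×ˢ Finset.range l).card := by
            rw [Finset.card_product, Finset.card_range]; ring
        _ ≤ (s.biUnion t).card := Finset.card_le_card hsub1
  -- apply Hall's theorem
  obtain ⟨f, hfinj, hft⟩ := (Finset.all_card_le_biUnion_card_iff_exists_injective t).mp hall
  -- basic properties of f
  have hfprop : ∀ a : {A // A ∈ S.powersetCard k},
      ((f a).1 ⊆ a.1 ∧ (f a).1.card = k') ∧ (f a).2 ≤ l ∧ ((f a).2 = l → (f a).1 = B₀) := by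
    intro a
    have := hft a
    rw [ht, Finset.mem_union] at this
    rcases this with hmem | hmem
    · rw [Finset.mem_product] at hmem
      obtain ⟨h1, h2⟩ := hmem
      rw [Finset.mem_powersetCard] at h1
      rw [Finset.mem_range] at h2
      exact ⟨⟨h1.1, h1.2⟩, le_of_lt h2, fun hc => absurd hc (Nat.ne_of_lt h2)⟩
    · by_cases hB : B₀ ⊆ a.1
      · rw [if_pos hB, Finset.mem_singleton] at hmem
        have h1 : (f a).1 = B₀ := by rw [hmem]
        have h2 : (f a).2 = l := by rw [hmem]
        refine ⟨⟨h1 ▸ hB, h1 ▸ (Finset.mem_powersetCard.mp hB₀).2⟩, h2.le, fun _ => h1⟩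
      · rw [if_neg hB] at hmem
        exact absurd hmem (Finset.notMem_empty _)
  -- define the sampling
  refine ⟨fun A => if hA : A ∈ S.powersetCard k then (f ⟨A, hA⟩).1 else ∅, ?_, ?_⟩
  · intro A hA
    simp only [dif_pos hA]
    exact (hfprop ⟨A, hA⟩).1
  · -- fibre counts
    intro B hB
    set ξ : Finset α → Finset α :=
      fun A => if hA : A ∈ S.powersetCard k then (f ⟨A, hA⟩).1 else ∅ with hξ
    have hfibre_le : ∀ C ∈ S.powersetCard k',
        ((S.powersetCard k).filter (fun A => ξ A = C)).card
          ≤ if C = B₀ then l + 1 else l := by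
      intro C _
      have hle : (if C = B₀ then l + 1 else l) = (Finset.range (if C = B₀ then l + 1 else l)).card := by
        rw [Finset.card_range]
      rw [hle]
      apply Finset.card_le_card_of_injOn (fun A => if hA : A ∈ S.powersetCard k then (f ⟨A, hA⟩).2 else 0)
      · intro A hA
        rw [Finset.mem_coe, Finset.mem_filter] at hA
        obtain ⟨hApk, hAC⟩ := hA
        simp only [dif_pos hApk]
        rw [hξ] at hAC
        simp only [dif_pos hApk] at hAC
        rw [Finset.mem_coe, Finset.mem_range]
        by_cases hCB : C = B₀
        · rw [if_pos hCB]
          exact Nat.lt_succ_of_le (hfprop ⟨A, hApk⟩).2.1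
        · rw [if_neg hCB]
          rcases lt_or_eq_of_le (hfprop ⟨A, hApk⟩).2.1 with hlt | heq
          · exact hlt
          · exact absurd (hAC ▸ (hfprop ⟨A, hApk⟩).2.2 heq) hCB
      · intro A₁ h₁ A₂ h₂ hEq
        rw [Finset.mem_coe, Finset.mem_filter] at h₁ h₂
        obtain ⟨hA₁, hC₁⟩ := h₁
        obtain ⟨hA₂, hC₂⟩ := h₂
        simp only [dif_pos hA₁, dif_pos hA₂] at hEq
        rw [hξ] at hC₁ hC₂
        simp only [dif_pos hA₁] at hC₁
        simp only [dif_pos hA₂] at hC₂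
        have : f ⟨A₁, hA₁⟩ = f ⟨A₂, hA₂⟩ := Prod.ext (by rw [hC₁, hC₂]) hEq
        exact congrArg Subtype.val (hfinj this)
    -- total count forces equality
    have htotal : ∑ C ∈ S.powersetCard k',
        ((S.powersetCard k).filter (fun A => ξ A = C)).card = l * n.choose k' + 1 := by
      rw [← Finset.card_eq_sum_card_fiberwise (fun A hA => ?_), hpkcard, h]
      · rw [Finset.mem_coe] at hA ⊢
        rw [Finset.mem_powersetCard]
        have h1 := (hfprop ⟨A, hA⟩).1
        rw [hξ]
        simp only [dif_pos hA]
        exact ⟨h1.1.trans (Finset.mem_powersetCard.mp hA).1, h1.2⟩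
    have hboundsum : ∑ C ∈ S.powersetCard k',
        (if C = B₀ then l + 1 else l) = l * n.choose k' + 1 := by
      have : ∀ C, (if C = B₀ then l + 1 else l) = l + (if C = B₀ then 1 else 0) := by
        intro C; split <;> ring
      simp_rw [this]
      rw [Finset.sum_add_distrib, Finset.sum_const, smul_eq_mul,
        Finset.sum_ite_eq' _ B₀ (fun _ => 1), if_pos hB₀, hpk'card]
      ring
    have heq : ∀ C ∈ S.powersetCard k',
        ((S.powersetCard k).filter (fun A => ξ A = C)).card = if C = B₀ then l + 1 else l := by
      rw [← Finset.sum_eq_sum_iff_of_le hfibre_le]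
      rw [htotal, hboundsum]
    have := heq B hB
    by_cases hCB : B = B₀
    · right; rw [this, if_pos hCB]
    · left; rw [this, if_neg hCB]
end
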